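/- Let B be a complete c.c.c. Boolean algebra, U a coherent P-ultrafilter on B, and {aᵢ : i < ω} a countable maximal antichain with U ∩ {aᵢ : i < ω} = ∅. Then for every sequence ⟨xₙ : n < ω⟩ of elements of U there exists y ∈ U such that for each n < ω the set {i < ω : aᵢ ∧ y ∧ ¬xₙ > 0} is finite. -/

import Mathlib

def IsBAFilter {B : Type*} [BooleanAlgebra B] (F : Set B) : Prop :=
  ⊤ ∈ F ∧ ⊥ ∉ F ∧ (∀ x ∈ F, ∀ y : B, x ≤ y → y ∈ F) ∧ ∀ x ∈ F, ∀ y ∈ F, x ⊓ y ∈ F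

def IsUltra {B : Type*} [BooleanAlgebra B] (U : Set B) : Prop :=
  IsBAFilter U ∧ ∀ x : B, x ∈ U ∨ xᶜ ∈ U

def IsBAMaxAntichain {B : Type*} [CompleteBooleanAlgebra B] (A : Set B) : Prop :=
  (∀ x ∈ A, x ≠ ⊥) ∧ (A.Pairwise fun x y => x ⊓ y = ⊥) ∧ sSup A = ⊤

private lemma piece_sup' {B : Type*} [CompleteBooleanAlgebra B] (x : ℕ → B) (s : Finset ℕ) :
    ∀ c : B, c ≤ ⨆ t : Finset ℕ, c ⊓ s.inf (fun n => if n ∈ t then x n else (x n)ᶜ) := by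
  classical
  induction s using Finset.induction_on with
  | empty =>
      intro c
      simpa using le_iSup
        (fun t : Finset ℕ => c ⊓ (∅ : Finset ℕ).inf (fun n => if n ∈ t then x n else (x n)ᶜ))
        (∅ : Finset ℕ)
  | @insert m s hm ih =>
      intro c
      have hsplit : c = (c ⊓ x m) ⊔ (c ⊓ (x m)ᶜ) := by
        rw [← inf_sup_left, sup_compl_eq_top, inf_top_eq]
      have h1 : c ⊓ x m ≤ ⨆ t : Finset ℕ,
          c ⊓ (insert m s).inf (fun n => if n ∈ t then x n else (x n)ᶜ) := by
        refine (ih (c ⊓ x m)).trans (iSup_le fun t => le_iSup_of_le (insert m t) ?_)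
        have hinf : s.inf (fun n => if n ∈ insert m t then x n else (x n)ᶜ)
            = s.inf (fun n => if n ∈ t then x n else (x n)ᶜ) := by
          refine Finset.inf_congr rfl fun n hn => ?_
          have hnm : n ≠ m := fun h => hm (h ▸ hn)
          simp [Finset.mem_insert, hnm]
        rw [Finset.inf_insert, hinf, if_pos (Finset.mem_insert_self m t), ← inf_assoc]
      have h2 : c ⊓ (x m)ᶜ ≤ ⨆ t : Finset ℕ,
          c ⊓ (insert m s).inf (fun n => if n ∈ t then x n else (x n)ᶜ) := by
        refine (ih (c ⊓ (x m)ᶜ)).trans (iSup_le fun t => le_iSup_of_le (t.erase m) ?_)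
        have hinf : s.inf (fun n => if n ∈ t.erase m then x n else (x n)ᶜ)
            = s.inf (fun n => if n ∈ t then x n else (x n)ᶜ) := by
          refine Finset.inf_congr rfl fun n hn => ?_
          have hnm : n ≠ m := fun h => hm (h ▸ hn)
          simp [Finset.mem_erase, hnm]
        rw [Finset.inf_insert, hinf, if_neg (Finset.notMem_erase m t), ← inf_assoc]
      calc c = (c ⊓ x m) ⊔ (c ⊓ (x m)ᶜ) := hsplit
      _ ≤ _ := sup_le h1 h2

theorem stmt_16 {B : Type*} [CompleteBooleanAlgebra B]
    (hccc : ∀ A : Set B, (∀ x ∈ A, x ≠ ⊥) → (A.Pairwise fun x y => x ⊓ y = ⊥) →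
      A.Countable)
    (U : Set B) (hU : IsUltra U)
    (hPU : ∀ P : Set B, IsBAMaxAntichain P → ∀ X : ℕ → Set B, (∀ n, X n ⊆ P) →
      (∀ n, sSup (X n) ∈ U) → ∃ Y ⊆ P, sSup Y ∈ U ∧ ∀ n, (Y \ X n).Finite)
    (a : ℕ → B) (hinj : Function.Injective a) (h0 : ∀ i, a i ≠ ⊥)
    (hd : ∀ i j, i ≠ j → a i ⊓ a j = ⊥) (htop : (⨆ i, a i) = ⊤)
    (hdisj : U ∩ Set.range a = ∅)
    (x : ℕ → B) (hx : ∀ n, x n ∈ U) :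
    ∃ y ∈ U, ∀ n : ℕ, {i : ℕ | a i ⊓ y ⊓ (x n)ᶜ ≠ ⊥}.Finite := by
  classical
  obtain ⟨⟨htopU, hbotU, hup, hmeet⟩, hultra⟩ := hU
  have haU : ∀ i, a i ∉ U := fun i hi =>
    Set.eq_empty_iff_forall_notMem.mp hdisj (a i) ⟨hi, ⟨i, rfl⟩⟩
  have haC : ∀ i, (a i)ᶜ ∈ U := fun i => (hultra (a i)).resolve_left (haU i)
  set f : ℕ → Finset ℕ → B :=
    fun i t => a i ⊓ (Finset.range (i+1)).inf (fun n => if n ∈ t then x n else (x n)ᶜ) with hf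
  set P : Set B := {b | b ≠ ⊥ ∧ ∃ i t, b = f i t} with hP
  have hfa : ∀ i t, f i t ≤ a i := fun i t => inf_le_left
  have hfP : ∀ i t, f i t ≤ sSup P := by
    intro i t
    rcases eq_or_ne (f i t) ⊥ with h | h
    · simp [h]
    · exact le_sSup ⟨h, i, t, rfl⟩
  have hdec : ∀ i t n, n ≤ i → (n ∈ t → f i t ≤ x n) ∧ (n ∉ t → f i t ≤ (x n)ᶜ) := by
    intro i t n hn
    have hmem : n ∈ Finset.range (i+1) := Finset.mem_range.mpr (Nat.lt_succ_of_le hn)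
    have h1 : f i t ≤ (fun n => if n ∈ t then x n else (x n)ᶜ) n :=
      le_trans inf_le_right (Finset.inf_le hmem)
    constructor <;> intro h <;> simpa [h] using h1
  have hcover : ∀ (c : B) i, c ⊓ a i ≤ ⨆ t : Finset ℕ, c ⊓ f i t := by
    intro c i
    refine (piece_sup' x (Finset.range (i+1)) (c ⊓ a i)).trans (iSup_le fun t => le_iSup_of_le t ?_)
    rw [hf]
    rw [inf_assoc]
  -- disjointness of pieces
  have hdisjf : ∀ i t j u, f i t ≠ f j u → f i t ⊓ f j u = ⊥ := by
    intro i t j u hne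
    rcases eq_or_ne i j with rfl | hij
    · by_cases hsame : ∀ n ∈ Finset.range (i+1), (n ∈ t ↔ n ∈ u)
      · refine absurd ?_ hne
        have hinf : (Finset.range (i+1)).inf (fun n => if n ∈ t then x n else (x n)ᶜ)
            = (Finset.range (i+1)).inf (fun n => if n ∈ u then x n else (x n)ᶜ) := by
          refine Finset.inf_congr rfl fun n hn => ?_
          by_cases h : n ∈ t
          · simp [h, (hsame n hn).mp h]
          · have h2 : n ∉ u := fun h' => h ((hsame n hn).mpr h')
            simp [h, h2]
        show a i ⊓ _ = a i ⊓ _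
        rw [hinf]
      · push_neg at hsame
        obtain ⟨n, hn, hiff⟩ := hsame
        have hni : n ≤ i := Nat.lt_succ_iff.mp (Finset.mem_range.mp hn)
        rcases hiff with ⟨h1', h2'⟩ | ⟨h1', h2'⟩
        · have h1 : f i t ≤ x n := (hdec i t n hni).1 h1'
          have h2 : f i u ≤ (x n)ᶜ := (hdec i u n hni).2 h2'
          exact le_bot_iff.mp (le_trans (inf_le_inf h1 h2) (by simp))
        · have h1 : f i t ≤ (x n)ᶜ := (hdec i t n hni).2 h1'
          have h3 : f i u ≤ x n := (hdec i u n hni).1 h2'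
          exact le_bot_iff.mp (le_trans (inf_le_inf h1 h3) (by simp))
    · exact le_bot_iff.mp (le_trans (inf_le_inf (hfa i t) (hfa j u)) (le_of_eq (hd i j hij)))
  -- P is a maximal antichain
  have hmax : IsBAMaxAntichain P := by
    refine ⟨fun b hb => hb.1, ?_, ?_⟩
    · intro p hp q hq hne
      obtain ⟨-, i, t, rfl⟩ := hp
      obtain ⟨-, j, u, rfl⟩ := hq
      exact hdisjf i t j u hne
    · refine le_antisymm le_top ?_
      rw [← htop]
      refine iSup_le fun i => ?_
      have := hcover ⊤ i
      simp only [top_inf_eq] at this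
      exact this.trans (iSup_le fun t => hfP i t)
  set X : ℕ → Set B := fun n => {b | b ∈ P ∧ b ≤ x n} with hX
  have hXsub : ∀ n, X n ⊆ P := fun n b hb => hb.1
  have hXU : ∀ n, sSup (X n) ∈ U := by
    intro n
    -- tail of antichain is in U
    have hsfin : ∀ s : Finset ℕ, ((s.sup a)ᶜ) ∈ U := by
      intro s
      induction s using Finset.induction_on with
      | empty => simpa using htopU
      | @insert m s hm ih =>
          rw [Finset.sup_insert, compl_sup]
          exact hmeet _ (haC m) _ ih
    set T : B := ⨆ i, ⨆ _ : n ≤ i, a i with hT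
    have hcT : ((Finset.range n).sup a)ᶜ ≤ T := by
      have : ((Finset.range n).sup a)ᶜ = ⨆ i, ((Finset.range n).sup a)ᶜ ⊓ a i := by
        rw [← inf_iSup_eq, htop, inf_top_eq]
      rw [this]
      refine iSup_le fun i => ?_
      rcases lt_or_ge i n with h | h
      · have : a i ≤ (Finset.range n).sup a := Finset.le_sup (Finset.mem_range.mpr h)
        calc ((Finset.range n).sup a)ᶜ ⊓ a i ≤ ((Finset.range n).sup a)ᶜ ⊓ (Finset.range n).sup a :=
              inf_le_inf_left _ this
        _ = ⊥ := compl_inf_eq_bot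
        _ ≤ T := bot_le
      · exact le_trans inf_le_right (le_iSup_of_le i (le_iSup_of_le h le_rfl))
    have hTU : T ∈ U := hup _ (hsfin (Finset.range n)) T hcT
    have hle : x n ⊓ T ≤ sSup (X n) := by
      rw [hT, inf_iSup_eq]
      refine iSup_le fun i => ?_
      rw [inf_iSup_eq]
      refine iSup_le fun hni => ?_
      refine (hcover (x n) i).trans (iSup_le fun t => ?_)
      by_cases h : n ∈ t
      · have h1 : f i t ≤ x n := (hdec i t n hni).1 h
        rcases eq_or_ne (f i t) ⊥ with hb | hb
        · simp [hb]
        · exact le_trans inf_le_right (le_sSup ⟨⟨hb, i, t, rfl⟩, h1⟩)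
      · have h1 : f i t ≤ (x n)ᶜ := (hdec i t n hni).2 h
        calc x n ⊓ f i t ≤ x n ⊓ (x n)ᶜ := inf_le_inf_left _ h1
        _ = ⊥ := by simp
        _ ≤ _ := bot_le
    exact hup _ (hmeet _ (hx n) _ hTU) _ hle
  obtain ⟨Y, hYP, hYU, hYfin⟩ := hPU P hmax X hXsub hXU
  refine ⟨sSup Y, hYU, fun n => ?_⟩
  have hsub : {i : ℕ | a i ⊓ sSup Y ⊓ (x n)ᶜ ≠ ⊥} ⊆ ⋃ p ∈ Y \ X n, {i : ℕ | p ≤ a i} := by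
    intro i hi
    by_contra hcon
    simp only [Set.mem_iUnion, Set.mem_setOf_eq, not_exists] at hcon
    apply hi
    have key : a i ⊓ sSup Y ⊓ (x n)ᶜ ≤ sSup Y ⊓ (a i ⊓ (x n)ᶜ) :=
      le_inf (le_trans inf_le_left inf_le_right)
        (le_inf (le_trans inf_le_left inf_le_left) inf_le_right)
    have hzero : sSup Y ⊓ (a i ⊓ (x n)ᶜ) = ⊥ := by
      rw [sSup_inf_eq]
      refine le_bot_iff.mp (iSup_le fun p => iSup_le fun hp => ?_)
      by_cases hpX : p ∈ X n
      · calc p ⊓ (a i ⊓ (x n)ᶜ) ≤ x n ⊓ (x n)ᶜ :=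
            inf_le_inf hpX.2 inf_le_right
        _ = ⊥ := by simp
      · have hpY : p ∈ Y \ X n := ⟨hp, hpX⟩
        have hnle : ¬ p ≤ a i := fun h => hcon p hpY h
        obtain ⟨hpne, j, t, rfl⟩ := hYP hp
        have hij : j ≠ i := by
          rintro rfl
          exact hnle (hfa j t)
        calc f j t ⊓ (a i ⊓ (x n)ᶜ) ≤ a j ⊓ a i := by
              refine le_inf (le_trans inf_le_left (hfa j t)) (le_trans inf_le_right inf_le_left)
        _ = ⊥ := hd j i hij
    exact le_bot_iff.mp (key.trans (le_of_eq hzero))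
  refine Set.Finite.subset (Set.Finite.biUnion (hYfin n) fun p hp => ?_) hsub
  have hpne : p ≠ ⊥ := (hYP hp.1).1
  refine Set.Subsingleton.finite ?_
  intro i hi j hj
  by_contra hij
  apply hpne
  exact le_bot_iff.mp ((le_inf hi hj).trans (le_of_eq (hd i j hij)))
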